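/- (Moments bound for adaptive two-stage composition.) Let μ₁ and ν₁ be probability measures on a measurable space Ω₁ with μ₁ ≪ ν₁, and let κ and η be Markov kernels from Ω₁ to a measurable space Ω₂ such that κ(ω₁) ≪ η(ω₁) for every ω₁. Fix λ > 0 and suppose there is a constant A₂ ∈ [0,∞) such that ∫ (d κ(ω₁)/d η(ω₁))^λ d κ(ω₁) ≤ e^{A₂} for every ω₁ ∈ Ω₁. Then μ₁ ⊗ₖ κ ≪ ν₁ ⊗ₖ η and ∫ (d(μ₁ ⊗ₖ κ)/d(ν₁ ⊗ₖ η))^λ d(μ₁ ⊗ₖ κ) ≤ e^{A₂} · ∫ (dμ₁/dν₁)^λ dμ₁. Consequently, the λ-th moment of the composed pair satisfies α_{comp}(λ) ≤ α₁(λ) + A₂, i.e., moments of adaptive compositions of mechanisms are subadditive. -/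

import Mathlib

open MeasureTheory ProbabilityTheory
open scoped ENNReal

private lemma aux_rpow_mul_self {lam : ℝ} (hlam : 0 < lam) (x : ℝ≥0∞) :
    x ^ lam * x = x ^ (lam + 1) := by
  rcases eq_or_ne x 0 with rfl | h0
  · simp [ENNReal.zero_rpow_of_pos hlam, ENNReal.zero_rpow_of_pos (by linarith : (0:ℝ) < lam + 1)]
  rcases eq_or_ne x ∞ with rfl | ht
  · simp [ENNReal.top_rpow_of_pos hlam, ENNReal.top_rpow_of_pos (by linarith : (0:ℝ) < lam + 1)]
  · rw [ENNReal.rpow_add _ _ h0 ht, ENNReal.rpow_one]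

private lemma aux_isup_min {p : ℝ} (hp : 1 ≤ p) (x : ℝ≥0∞) :
    (⨆ N : ℕ, min x (N : ℝ≥0∞) ^ p) = x ^ p := by
  have hp0 : (0:ℝ) ≤ p := by linarith
  rcases eq_or_ne x ∞ with rfl | hx
  · simp only [min_eq_right (le_top : (_ : ℝ≥0∞) ≤ ∞)]
    rw [ENNReal.top_rpow_of_pos (by linarith : (0:ℝ) < p)]
    refine le_antisymm le_top ?_
    calc (∞ : ℝ≥0∞) = ⨆ N : ℕ, (N : ℝ≥0∞) := ENNReal.iSup_natCast.symm
      _ ≤ ⨆ N : ℕ, (N : ℝ≥0∞) ^ p := by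
          refine iSup_mono fun N => ?_
          rcases Nat.eq_zero_or_pos N with rfl | hN
          · simp
          · calc (N : ℝ≥0∞) = (N : ℝ≥0∞) ^ (1:ℝ) := (ENNReal.rpow_one _).symm
              _ ≤ (N : ℝ≥0∞) ^ p := ENNReal.rpow_le_rpow_of_exponent_le
                  (by exact_mod_cast hN) hp
  · refine le_antisymm (iSup_le fun N => ENNReal.rpow_le_rpow (min_le_left _ _) hp0) ?_
    obtain ⟨N, hN⟩ := ENNReal.exists_nat_gt hx
    exact le_iSup_of_le N (by rw [min_eq_left hN.le])

private lemma fiber_bound {Ω₂ : Type*} [MeasurableSpace Ω₂] (K Q : Measure Ω₂)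
    [IsProbabilityMeasure K] [IsProbabilityMeasure Q] (hKQ : K ≪ Q)
    {lam : ℝ} (hlam : 0 < lam) (E : ℝ≥0∞)
    (hE : ∫⁻ x, (K.rnDeriv Q x) ^ lam ∂K ≤ E)
    {s : Ω₂ → ℝ≥0∞} (hs : Measurable s) (c : ℝ≥0∞)
    (heq : ∀ N : ℕ, ∫⁻ x, min (s x) (N : ℝ≥0∞) ^ lam * s x ∂Q
      = c * ∫⁻ x, min (s x) (N : ℝ≥0∞) ^ lam ∂K) :
    ∫⁻ x, s x ^ (lam + 1) ∂Q ≤ E * c ^ (lam + 1) := by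
  set f := K.rnDeriv Q with hf_def
  have hf : Measurable f := Measure.measurable_rnDeriv _ _
  have hKwd : Q.withDensity f = K := Measure.withDensity_rnDeriv_eq _ _ hKQ
  have hwd : ∀ g : Ω₂ → ℝ≥0∞, Measurable g → ∫⁻ x, g x ∂K = ∫⁻ x, f x * g x ∂Q := by
    intro g hg
    conv_lhs => rw [← hKwd]
    rw [lintegral_withDensity_eq_lintegral_mul _ hf hg]
    rfl
  have hE' : ∫⁻ x, f x ^ (lam + 1) ∂Q ≤ E := by
    calc ∫⁻ x, f x ^ (lam + 1) ∂Q = ∫⁻ x, f x * f x ^ lam ∂Q := by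
          refine lintegral_congr fun x => ?_
          rw [mul_comm, aux_rpow_mul_self hlam]
      _ = ∫⁻ x, f x ^ lam ∂K := (hwd _ (hf.pow_const lam)).symm
      _ ≤ E := hE
  set q := lam + 1 with hq_def
  have hq1 : 1 < q := by linarith
  have hq0 : 0 < q := by linarith
  set p := q / lam with hp_def
  have hpq : Real.HolderConjugate p q := by
    rw [Real.holderConjugate_iff]
    constructor
    · rw [hp_def, lt_div_iff₀ hlam]; linarith
    · rw [hp_def]; field_simp; exact hq_def.symm
  have hlp : lam * p = q := by rw [hp_def]; field_simp
  set J := c ^ q * ∫⁻ x, f x ^ q ∂Q with hJ_def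
  have hIN : ∀ N : ℕ, ∫⁻ x, min (s x) (N : ℝ≥0∞) ^ q ∂Q ≤ J := by
    intro N
    set m : Ω₂ → ℝ≥0∞ := fun x => min (s x) (N : ℝ≥0∞) with hm_def
    have hm : Measurable m := hs.min measurable_const
    set I := ∫⁻ x, m x ^ q ∂Q with hI_def
    have hI_fin : I ≠ ∞ := by
      refine ne_top_of_le_ne_top ?_ (le_trans (lintegral_mono fun x =>
        ENNReal.rpow_le_rpow (min_le_right _ _) hq0.le) le_rfl)
      rw [lintegral_const, measure_univ, mul_one]
      exact ENNReal.rpow_ne_top_of_nonneg hq0.le (ENNReal.natCast_ne_top N)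
    have step1 : I ≤ ∫⁻ x, m x ^ lam * s x ∂Q := by
      refine lintegral_mono fun x => ?_
      rw [← aux_rpow_mul_self hlam]
      exact mul_le_mul_right (min_le_left _ _) _
    have step2 : c * ∫⁻ x, m x ^ lam ∂K = ∫⁻ x, m x ^ lam * (c * f x) ∂Q := by
      rw [hwd _ (hm.pow_const lam), ← lintegral_const_mul c (f := fun x => f x * m x ^ lam) (hf.mul (hm.pow_const lam))]
      exact lintegral_congr fun x => by ring
    have step3 : ∫⁻ x, m x ^ lam * (c * f x) ∂Q ≤ I ^ (1/p) * J ^ (1/q) := by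
      have h := ENNReal.lintegral_mul_le_Lp_mul_Lq Q hpq
        (f := fun x => m x ^ lam) (g := fun x => c * f x)
        ((hm.pow_const lam).aemeasurable) ((measurable_const.mul hf).aemeasurable)
      have e1 : ∫⁻ x, (m x ^ lam) ^ p ∂Q = I := by
        refine lintegral_congr fun x => ?_
        rw [← ENNReal.rpow_mul, hlp]
      have e2 : ∫⁻ x, (c * f x) ^ q ∂Q = J := by
        rw [hJ_def, ← lintegral_const_mul (c ^ q) (hf.pow_const q)]
        exact lintegral_congr fun x => ENNReal.mul_rpow_of_nonneg _ _ hq0.le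
      calc ∫⁻ x, m x ^ lam * (c * f x) ∂Q
          = ∫⁻ x, ((fun x => m x ^ lam) * fun x => c * f x) x ∂Q := by rfl
        _ ≤ (∫⁻ x, (m x ^ lam) ^ p ∂Q) ^ (1/p) * (∫⁻ x, (c * f x) ^ q ∂Q) ^ (1/q) := h
        _ = I ^ (1/p) * J ^ (1/q) := by rw [e1, e2]
    have hholder : I ≤ I ^ (1/p) * J ^ (1/q) :=
      step1.trans ((heq N).le.trans (step2.le.trans step3))
    rcases eq_or_ne I 0 with hI0 | hI0
    · rw [hI_def] at hI0; rw [hI_def, hI0]; exact zero_le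
    · have hIp_ne0 : I ^ (1/p) ≠ 0 := by
        simp [ENNReal.rpow_eq_zero_iff, hI0, hI_fin]
      have hIp_netop : I ^ (1/p) ≠ ∞ := by
        simp [ENNReal.rpow_eq_top_iff, hI0, hI_fin]
      have hsum : (1:ℝ)/p + 1/q = 1 := by
        have := (Real.holderConjugate_iff.mp hpq).2
        rw [one_div, one_div]; exact this
      have hself : I = I ^ (1/p) * I ^ (1/q) := by
        rw [← ENNReal.rpow_add _ _ hI0 hI_fin, hsum, ENNReal.rpow_one]
      have hle : I ^ (1/q) ≤ J ^ (1/q) := by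
        have h2 : I ^ (1/p) * I ^ (1/q) ≤ I ^ (1/p) * J ^ (1/q) :=
          calc I ^ (1/p) * I ^ (1/q) = I := hself.symm
            _ ≤ I ^ (1/p) * J ^ (1/q) := hholder
        exact (ENNReal.mul_le_mul_iff_right hIp_ne0 hIp_netop).mp h2
      have := ENNReal.rpow_le_rpow hle hq0.le
      rwa [← ENNReal.rpow_mul, ← ENNReal.rpow_mul, one_div,
        inv_mul_cancel₀ hq0.ne', ENNReal.rpow_one, ENNReal.rpow_one] at this
  calc ∫⁻ x, s x ^ q ∂Q = ∫⁻ x, ⨆ N : ℕ, min (s x) (N : ℝ≥0∞) ^ q ∂Q := by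
        exact lintegral_congr fun x => (aux_isup_min hq1.le _).symm
    _ = ⨆ N : ℕ, ∫⁻ x, min (s x) (N : ℝ≥0∞) ^ q ∂Q := by
        refine lintegral_iSup (fun N => (hs.min measurable_const).pow_const q) ?_
        intro i j hij x
        exact ENNReal.rpow_le_rpow (min_le_min le_rfl (by exact_mod_cast hij)) hq0.le
    _ ≤ J := iSup_le hIN
    _ = (∫⁻ x, f x ^ q ∂Q) * c ^ q := by rw [hJ_def, mul_comm]
    _ ≤ E * c ^ q := mul_le_mul_left hE' _

/-- Moments bound for adaptive two-stage composition: if `μ₁ ≪ ν₁`, `κ ω ≪ η ω` for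
every `ω`, and the λ-th moment of each `(κ ω, η ω)` is bounded by `e^{A₂}`, then
`μ₁ ⊗ₘ κ ≪ ν₁ ⊗ₘ η` and the λ-th moment of the composed pair is bounded by
`e^{A₂}` times the λ-th moment of `(μ₁, ν₁)`. -/
theorem moments_compProd_le
    {Ω₁ Ω₂ : Type*} [MeasurableSpace Ω₁] [MeasurableSpace Ω₂]
    (μ₁ ν₁ : Measure Ω₁) [IsProbabilityMeasure μ₁] [IsProbabilityMeasure ν₁]
    (hac₁ : μ₁ ≪ ν₁)
    (κ η : Kernel Ω₁ Ω₂) [IsMarkovKernel κ] [IsMarkovKernel η]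
    (hacκ : ∀ ω₁ : Ω₁, κ ω₁ ≪ η ω₁)
    (lam : ℝ) (hlam : 0 < lam) (A₂ : ℝ) (hA₂ : 0 ≤ A₂)
    (hbound : ∀ ω₁ : Ω₁,
      ∫⁻ x, ((κ ω₁).rnDeriv (η ω₁) x) ^ lam ∂(κ ω₁) ≤ ENNReal.ofReal (Real.exp A₂)) :
    (μ₁ ⊗ₘ κ) ≪ (ν₁ ⊗ₘ η) ∧
      ∫⁻ x, ((μ₁ ⊗ₘ κ).rnDeriv (ν₁ ⊗ₘ η) x) ^ lam ∂(μ₁ ⊗ₘ κ) ≤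
        ENNReal.ofReal (Real.exp A₂) * ∫⁻ x, (μ₁.rnDeriv ν₁ x) ^ lam ∂μ₁ := by
  have hAC : (μ₁ ⊗ₘ κ) ≪ (ν₁ ⊗ₘ η) :=
    hac₁.compProd (Filter.Eventually.of_forall hacκ)
  refine ⟨hAC, ?_⟩
  set r := μ₁.rnDeriv ν₁ with hr_def
  set ρ := (μ₁ ⊗ₘ κ).rnDeriv (ν₁ ⊗ₘ η) with hρ_def
  have hr : Measurable r := Measure.measurable_rnDeriv _ _
  have hρ : Measurable ρ := Measure.measurable_rnDeriv _ _
  have hμwd : ν₁.withDensity r = μ₁ := Measure.withDensity_rnDeriv_eq _ _ hac₁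
  have hσwd : (ν₁ ⊗ₘ η).withDensity ρ = μ₁ ⊗ₘ κ := Measure.withDensity_rnDeriv_eq _ _ hAC
  have key : ∀ g : Ω₁ × Ω₂ → ℝ≥0∞, Measurable g →
      (fun ω₁ => ∫⁻ ω₂, g (ω₁, ω₂) * ρ (ω₁, ω₂) ∂η ω₁) =ᵐ[ν₁]
        fun ω₁ => r ω₁ * ∫⁻ ω₂, g (ω₁, ω₂) ∂κ ω₁ := by
    intro g hg
    have hgρ : Measurable fun p : Ω₁ × Ω₂ => g p * ρ p := hg.mul hρ
    have meas1 : Measurable fun ω₁ => ∫⁻ ω₂, g (ω₁, ω₂) * ρ (ω₁, ω₂) ∂η ω₁ :=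
      Measurable.lintegral_kernel_prod_right (κ := η)
        (f := fun a b => g (a, b) * ρ (a, b)) (by exact hgρ)
    have meas2 : Measurable fun ω₁ => ∫⁻ ω₂, g (ω₁, ω₂) ∂κ ω₁ :=
      Measurable.lintegral_kernel_prod_right (κ := κ) (f := fun a b => g (a, b)) (by exact hg)
    refine ae_eq_of_forall_setLIntegral_eq_of_sigmaFinite meas1 (hr.mul meas2)
      fun A hA _ => ?_
    have h1 : ∫⁻ ω₁ in A, ∫⁻ ω₂, g (ω₁, ω₂) * ρ (ω₁, ω₂) ∂η ω₁ ∂ν₁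
        = ∫⁻ x in A ×ˢ Set.univ, g x * ρ x ∂(ν₁ ⊗ₘ η) := by
      rw [Measure.setLIntegral_compProd hgρ hA MeasurableSet.univ]
      simp
    have h2 : ∫⁻ x in A ×ˢ Set.univ, g x ∂(μ₁ ⊗ₘ κ)
        = ∫⁻ x in A ×ˢ Set.univ, g x * ρ x ∂(ν₁ ⊗ₘ η) := by
      conv_lhs => rw [← hσwd]
      rw [restrict_withDensity (hA.prod MeasurableSet.univ),
        lintegral_withDensity_eq_lintegral_mul _ hρ hg]
      exact lintegral_congr fun x => mul_comm _ _
    have h3 : ∫⁻ x in A ×ˢ Set.univ, g x ∂(μ₁ ⊗ₘ κ)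
        = ∫⁻ ω₁ in A, ∫⁻ ω₂, g (ω₁, ω₂) ∂κ ω₁ ∂μ₁ := by
      rw [Measure.setLIntegral_compProd hg hA MeasurableSet.univ]
      simp
    have h4 : ∫⁻ ω₁ in A, ∫⁻ ω₂, g (ω₁, ω₂) ∂κ ω₁ ∂μ₁
        = ∫⁻ ω₁ in A, r ω₁ * ∫⁻ ω₂, g (ω₁, ω₂) ∂κ ω₁ ∂ν₁ := by
      conv_lhs => rw [← hμwd]
      rw [restrict_withDensity hA, lintegral_withDensity_eq_lintegral_mul _ hr meas2]
      rfl
    rw [h1, ← h2, h3, h4]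
  have hbound' : ∀ᵐ ω₁ ∂ν₁, ∫⁻ ω₂, ρ (ω₁, ω₂) ^ (lam + 1) ∂η ω₁ ≤
      ENNReal.ofReal (Real.exp A₂) * r ω₁ ^ (lam + 1) := by
    have hkeyN : ∀ᵐ ω₁ ∂ν₁, ∀ N : ℕ,
        (∫⁻ ω₂, min (ρ (ω₁, ω₂)) (N : ℝ≥0∞) ^ lam * ρ (ω₁, ω₂) ∂η ω₁)
          = r ω₁ * ∫⁻ ω₂, min (ρ (ω₁, ω₂)) (N : ℝ≥0∞) ^ lam ∂κ ω₁ := by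
      rw [MeasureTheory.ae_all_iff]
      intro N
      exact key (fun x => min (ρ x) (N : ℝ≥0∞) ^ lam)
        ((hρ.min measurable_const).pow_const lam)
    filter_upwards [hkeyN] with ω₁ hω₁
    exact fiber_bound (κ ω₁) (η ω₁) (hacκ ω₁) hlam _ (hbound ω₁)
      (hρ.comp measurable_prodMk_left) (r ω₁) hω₁
  calc ∫⁻ x, ρ x ^ lam ∂(μ₁ ⊗ₘ κ)
      = ∫⁻ x, ρ x ^ (lam + 1) ∂(ν₁ ⊗ₘ η) := by
        conv_lhs => rw [← hσwd]
        rw [lintegral_withDensity_eq_lintegral_mul _ hρ (hρ.pow_const lam)]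
        refine lintegral_congr fun x => ?_
        simp only [Pi.mul_apply]
        rw [mul_comm, aux_rpow_mul_self hlam]
    _ = ∫⁻ ω₁, ∫⁻ ω₂, ρ (ω₁, ω₂) ^ (lam + 1) ∂η ω₁ ∂ν₁ :=
        Measure.lintegral_compProd (hρ.pow_const _)
    _ ≤ ∫⁻ ω₁, ENNReal.ofReal (Real.exp A₂) * r ω₁ ^ (lam + 1) ∂ν₁ :=
        lintegral_mono_ae hbound'
    _ = ENNReal.ofReal (Real.exp A₂) * ∫⁻ ω₁, r ω₁ ^ (lam + 1) ∂ν₁ :=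
        lintegral_const_mul _ (hr.pow_const _)
    _ = ENNReal.ofReal (Real.exp A₂) * ∫⁻ x, r x ^ lam ∂μ₁ := by
        congr 1
        conv_rhs => rw [← hμwd]
        rw [lintegral_withDensity_eq_lintegral_mul _ hr (hr.pow_const lam)]
        refine lintegral_congr fun x => ?_
        simp only [Pi.mul_apply]
        rw [mul_comm, aux_rpow_mul_self hlam]
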